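/- Let ρ > 0, θ ∈ [1/2, 1], τ > 0 and consider the scalar scheme for the undamped oscillator written in first-order form: (η^{n+θ} − ηⁿ)/(θτ) = ξ^{n+θ}, ρ(ξ^{n+θ} − ξⁿ)/(θτ) = −k η^{n+θ} with k > 0, followed by the extrapolations ηⁿ⁺¹ = θ⁻¹ η^{n+θ} − (θ⁻¹ − 1)ηⁿ and ξⁿ⁺¹ = θ⁻¹ ξ^{n+θ} − (θ⁻¹ − 1)ξⁿ. Then the discrete energy Eⁿ = (ρ/2)(ξⁿ)² + (k/2)(ηⁿ)² satisfies Eⁿ⁺¹ ≤ Eⁿ for all n. -/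
import Mathlib


/-- Unconditional stability of the refactorized Cauchy θ-method for the scalar
undamped oscillator: with `θ ∈ [1/2,1]`, the BE step followed by linear
extrapolation dissipates the discrete energy `E = (ρ/2)ξ² + (k/2)η²`. -/
theorem oscillator_energy_dissipation (ρ k θ τ : ℝ)
    (hρ : 0 < ρ) (hk : 0 < k) (hθ : θ ∈ Set.Icc (1/2 : ℝ) 1) (hτ : 0 < τ)
    (ηn ξn ηnθ ξnθ ηn1 ξn1 : ℝ)
    (hBE1 : (ηnθ - ηn) / (θ * τ) = ξnθ)
    (hBE2 : ρ * ((ξnθ - ξn) / (θ * τ)) = -k * ηnθ)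
    (hFE1 : ηn1 = θ⁻¹ * ηnθ - (θ⁻¹ - 1) * ηn)
    (hFE2 : ξn1 = θ⁻¹ * ξnθ - (θ⁻¹ - 1) * ξn) :
    ρ / 2 * ξn1 ^ 2 + k / 2 * ηn1 ^ 2 ≤ ρ / 2 * ξn ^ 2 + k / 2 * ηn ^ 2 := by
  obtain ⟨hθ1, hθ2⟩ := hθ
  have hθ0 : 0 < θ := by linarith
  have hθτ : θ * τ ≠ 0 := by positivity
  have h1 : ηnθ - ηn = ξnθ * (θ * τ) := by
    field_simp at hBE1; linarith
  have h2 : ρ * (ξnθ - ξn) = -k * ηnθ * (θ * τ) := by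
    field_simp at hBE2; linarith
  have hcross : ρ * (ξnθ - ξn) * ξnθ + k * (ηnθ - ηn) * ηnθ = 0 := by
    rw [h1, h2]; ring
  have hinv : θ⁻¹ = 1 / θ := by rw [one_div]
  rw [hFE1, hFE2, hinv]
  have h3 : ρ / 2 * (1/θ * ξnθ - (1/θ - 1) * ξn) ^ 2 + k / 2 * (1/θ * ηnθ - (1/θ - 1) * ηn) ^ 2
      - (ρ / 2 * ξn ^ 2 + k / 2 * ηn ^ 2)
      = (1/θ^2) * (1/2 - θ) * (ρ * (ξnθ - ξn)^2 + k * (ηnθ - ηn)^2)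
        + (1/θ) * (ρ * (ξnθ - ξn) * ξnθ + k * (ηnθ - ηn) * ηnθ) := by
    field_simp
    ring
  have hD : 0 ≤ ρ * (ξnθ - ξn)^2 + k * (ηnθ - ηn)^2 := by positivity
  have hc : (1/θ^2) * (1/2 - θ) ≤ 0 := by
    apply mul_nonpos_of_nonneg_of_nonpos
    · positivity
    · linarith
  rw [hcross, mul_zero, add_zero] at h3
  nlinarith [mul_nonpos_of_nonpos_of_nonneg hc hD]
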